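/- Let x₀ ∈ ℝ with x₀ ≠ 1, let α > 1 and let T* satisfy 0 < T* < (α − 1)/(α(1 + α|x₀|)). Then there exists a continuously differentiable function x : [0,T*] → ℝ with x(0) = x₀ and ẋ(t) = x(t) − max_{s∈[0,t]} x²(s) for all t ∈ [0,T*]. -/

import Mathlib

/-- Local existence for the modified logistic equation with maxima
`ẋ(t) = x(t) − max_{s∈[0,t]} x²(s)`, `x(0) = x₀ ≠ 1`, on `[0,T*]` with
`0 < T* < (α−1)/(α(1+α|x₀|))` for some `α > 1`. -/
theorem exists_solution_logistic_with_maxima (x₀ : ℝ) (hx₀ : x₀ ≠ 1) (α : ℝ) (hα : 1 < α)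
    (T : ℝ) (hT : 0 < T) (hT' : T < (α - 1) / (α * (1 + α * |x₀|))) :
    ∃ x : ℝ → ℝ, x 0 = x₀ ∧ ∀ t ∈ Set.Icc (0:ℝ) T, HasDerivWithinAt x
      (x t - sSup ((fun s => (x s) ^ 2) '' Set.Icc 0 t)) (Set.Icc 0 T) t := by
  have ha0 : 0 ≤ |x₀| := abs_nonneg _
  have hα0 : (0:ℝ) < α := by linarith
  have hd0 : 0 < α * (1 + α * |x₀|) := by
    have : 0 ≤ α * |x₀| := mul_nonneg hα0.le ha0
    nlinarith
  have hT1 : T < 1 / (1 + |x₀|) := by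
    have h1 : (α - 1) / (α * (1 + α * |x₀|)) ≤ 1 / (1 + |x₀|) := by
      rw [div_le_div_iff₀ hd0 (by linarith)]
      nlinarith [mul_nonneg (mul_nonneg hα0.le (by linarith : (0:ℝ) ≤ α - 1)) ha0]
    linarith
  have key : ∀ b : ℝ, 0 < b → b ≤ |x₀| → Real.exp T * b < 1 + b := by
    intro b hb hba
    have h1 : T < 1 / (1 + b) := by
      refine lt_of_lt_of_le hT1 (one_div_le_one_div_of_le (by linarith) (by linarith))
    have h2 : b / (1 + b) ≤ Real.exp (-(1 / (1 + b))) := by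
      have h3 := Real.add_one_le_exp (-(1 / (1 + b)))
      have h4 : -(1 / (1 + b)) + 1 = b / (1 + b) := by field_simp; ring
      linarith
    have h5 : Real.exp (1 / (1 + b)) * b ≤ 1 + b := by
      rw [Real.exp_neg, inv_eq_one_div, div_le_div_iff₀ (by positivity) (Real.exp_pos _)] at h2
      nlinarith
    nlinarith [Real.exp_lt_exp.2 h1, hb]
  rcases lt_or_gt_of_ne hx₀ with hlt | hgt
  · -- x₀ < 1 : logistic solution x(t) = x₀ / (x₀ + (1-x₀)exp(-t))
    set d : ℝ → ℝ := fun u => x₀ + (1 - x₀) * Real.exp (-u) with hd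
    refine ⟨fun u => x₀ / d u, by simp [hd], ?_⟩
    have h1x : 0 < 1 - x₀ := by linarith
    have hdpos : ∀ u ∈ Set.Icc (0:ℝ) T, 0 < d u := by
      intro u hu
      have he : Real.exp (-T) ≤ Real.exp (-u) := Real.exp_le_exp.2 (by linarith [hu.2])
      have hstep : 0 < x₀ + (1 - x₀) * Real.exp (-T) := by
        rcases le_or_gt 0 x₀ with h | h
        · positivity
        · have hk := key (-x₀) (by linarith) (le_of_eq (abs_of_neg h).symm)
          rw [Real.exp_neg]
          nlinarith [Real.exp_pos T, mul_inv_cancel₀ (ne_of_gt (Real.exp_pos T)),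
            inv_pos.2 (Real.exp_pos T)]
      have : (1 - x₀) * Real.exp (-T) ≤ (1 - x₀) * Real.exp (-u) :=
        mul_le_mul_of_nonneg_left he h1x.le
      simp only [hd]; linarith
    intro t ht
    have hdt := hdpos t ht
    -- monotonicity of x²
    have hmono : ∀ s ∈ Set.Icc (0:ℝ) t, (x₀ / d s) ^ 2 ≤ (x₀ / d t) ^ 2 := by
      intro s hs
      have hsT : s ∈ Set.Icc (0:ℝ) T := ⟨hs.1, le_trans hs.2 ht.2⟩
      have hds := hdpos s hsT
      have hle : d t ≤ d s := by
        have : Real.exp (-t) ≤ Real.exp (-s) := Real.exp_le_exp.2 (by linarith [hs.2])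
        simp only [hd]; nlinarith
      rw [div_pow, div_pow]
      exact div_le_div_of_nonneg_left (by positivity) (by positivity)
        (pow_le_pow_left₀ hdt.le hle 2)
    have hsup : sSup ((fun s => (x₀ / d s) ^ 2) '' Set.Icc 0 t) = (x₀ / d t) ^ 2 := by
      apply IsGreatest.csSup_eq
      constructor
      · exact ⟨t, ⟨ht.1, le_refl t⟩, rfl⟩
      · rintro y ⟨s, hs, rfl⟩
        exact hmono s hs
    have hdd : HasDerivAt d (-((1 - x₀) * Real.exp (-t))) t := by
      have h1 : HasDerivAt (fun u : ℝ => Real.exp (-u)) (-Real.exp (-t)) t := by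
        have := (Real.hasDerivAt_exp (-t)).comp t (hasDerivAt_neg t); rw [mul_neg_one] at this; exact this
      simpa [mul_comm, mul_left_comm, hd] using (h1.const_mul (1 - x₀)).const_add x₀
    have hxd : HasDerivAt (fun u => x₀ / d u)
        ((0 * d t - x₀ * (-((1 - x₀) * Real.exp (-t)))) / d t ^ 2) t :=
      (hasDerivAt_const t x₀).div hdd (ne_of_gt hdt)
    have heq : (0 * d t - x₀ * (-((1 - x₀) * Real.exp (-t)))) / d t ^ 2
        = x₀ / d t - (x₀ / d t) ^ 2 := by
      have hdtne := ne_of_gt hdt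
      field_simp
      simp only [hd]
      ring
    rw [hsup]
    rw [heq] at hxd
    exact hxd.hasDerivWithinAt
  · -- x₀ > 1 : linear solution x(t) = x₀² + (x₀ - x₀²) exp t
    refine ⟨fun u => x₀ ^ 2 + (x₀ - x₀ ^ 2) * Real.exp u, by simp, ?_⟩
    have hx0p : 0 < x₀ := by linarith
    have hk := key x₀ hx0p (le_of_eq (abs_of_pos hx0p).symm)
    intro t ht
    have hbound : ∀ s ∈ Set.Icc (0:ℝ) t,
        (x₀ ^ 2 + (x₀ - x₀ ^ 2) * Real.exp s) ^ 2 ≤ x₀ ^ 2 := by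
      intro s hs
      have h1 : (1:ℝ) ≤ Real.exp s := Real.one_le_exp hs.1
      have h2 : Real.exp s ≤ Real.exp T := Real.exp_le_exp.2 (le_trans hs.2 ht.2)
      have hub : x₀ ^ 2 + (x₀ - x₀ ^ 2) * Real.exp s ≤ x₀ := by
        nlinarith [mul_nonneg (show (0:ℝ) ≤ x₀ ^ 2 - x₀ by nlinarith)
          (show (0:ℝ) ≤ Real.exp s - 1 by linarith)]
      have hlb : -x₀ ≤ x₀ ^ 2 + (x₀ - x₀ ^ 2) * Real.exp s := by nlinarith
      exact sq_le_sq' hlb hub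
    have hsup : sSup ((fun s => (x₀ ^ 2 + (x₀ - x₀ ^ 2) * Real.exp s) ^ 2) '' Set.Icc 0 t)
        = x₀ ^ 2 := by
      apply IsGreatest.csSup_eq
      constructor
      · refine ⟨0, ⟨le_refl 0, ht.1⟩, by simp⟩
      · rintro y ⟨s, hs, rfl⟩
        exact hbound s hs
    have hxd : HasDerivAt (fun u => x₀ ^ 2 + (x₀ - x₀ ^ 2) * Real.exp u)
        ((x₀ - x₀ ^ 2) * Real.exp t) t :=
      ((Real.hasDerivAt_exp t).const_mul (x₀ - x₀ ^ 2)).const_add (x₀ ^ 2)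
    rw [hsup]
    have : (x₀ - x₀ ^ 2) * Real.exp t
        = (x₀ ^ 2 + (x₀ - x₀ ^ 2) * Real.exp t) - x₀ ^ 2 := by ring
    rw [this] at hxd
    exact hxd.hasDerivWithinAt
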